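/- arXiv:2005.11693 — 3 statements merged into one kernel-verified Lean document; each statement's English description precedes it below -/
import Mathlib

section
/- Let H be a finite-dimensional complex Hilbert space, A a normal operator on H, and suppose Av = αv + w with v ≠ 0. Fix δ > 0 and let V_δ be the direct sum of eigenspaces of A for eigenvalues η with |η - α| < δ. Then there exists a unit vector e ∈ V_δ such that ‖v - ‖v‖·e‖ ≤ 2‖w‖/δ, provided V_δ ≠ 0 (which holds when ‖w‖/‖v‖ < δ). -/
open Module

section Aux

open ContinuousLinearMap

variable {H : Type*} [NormedAddCommGroup H] [InnerProductSpace ℂ H] [FiniteDimensional ℂ H]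

lemma adj_eig {A : H →L[ℂ] H} (hA : IsStarNormal A) {η : ℂ} {x : H} (hx : A x = η • x) :
    ContinuousLinearMap.adjoint A x = (starRingEnd ℂ) η • x := by
  set T : H →L[ℂ] H := A - η • 1 with hT
  have hTnormal : Commute (star T) T := by
    have hc := hA.star_comm_self
    simp only [hT, Commute, SemiconjBy, star_sub, star_smul, star_one, RCLike.star_def]
    simp only [sub_mul, mul_sub, smul_mul_assoc, mul_smul_comm, mul_one, one_mul]
    rw [hc]
    simp only [smul_sub, smul_smul, mul_comm]
    abel
  have hTx : T x = 0 := by simp [hT, hx, sub_apply, smul_apply, one_apply]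
  have hnorm : ‖star T x‖ ^ 2 = ‖T x‖ ^ 2 := by
    have h1 : (inner ℂ (star T x) (star T x) : ℂ) = inner ℂ (T x) (T x) := by
      rw [ContinuousLinearMap.star_eq_adjoint, ContinuousLinearMap.adjoint_inner_left]
      have : T ((ContinuousLinearMap.adjoint T) x) = (ContinuousLinearMap.adjoint T) (T x) := by
        have := hTnormal
        rw [ContinuousLinearMap.star_eq_adjoint] at this
        calc T ((ContinuousLinearMap.adjoint T) x) = (T * ContinuousLinearMap.adjoint T) x := rfl
        _ = (ContinuousLinearMap.adjoint T * T) x := by rw [← this]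
        _ = _ := rfl
      rw [this, ContinuousLinearMap.adjoint_inner_right]
    have h2 := congrArg RCLike.re h1
    rwa [inner_self_eq_norm_sq, inner_self_eq_norm_sq] at h2
  have : star T x = 0 := by
    rw [hTx] at hnorm
    simpa [pow_eq_zero_iff] using hnorm
  have hstar : star T = ContinuousLinearMap.adjoint A - (starRingEnd ℂ) η • 1 := by
    simp [hT, star_sub, star_smul, ContinuousLinearMap.star_eq_adjoint, RCLike.star_def]
  rw [hstar] at this
  have := sub_eq_zero.mp (by simpa [sub_apply, smul_apply, one_apply] using this)
  simpa using this

lemma eig_ortho {A : H →L[ℂ] H} (hA : IsStarNormal A) :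
    OrthogonalFamily ℂ (fun η : ℂ => (Module.End.eigenspace (A : H →ₗ[ℂ] H) η : Submodule ℂ H))
      (fun η => (Module.End.eigenspace (A : H →ₗ[ℂ] H) η).subtypeₗᵢ) := by
  apply OrthogonalFamily.of_pairwise
  intro η μ hημ x hx y hy
  have hx' : A x = η • x := by
    have := Module.End.mem_eigenspace_iff.mp hx; simpa using this
  have hy' : A y = μ • y := by
    have := Module.End.mem_eigenspace_iff.mp hy; simpa using this
  have h1 : (inner ℂ x (A y) : ℂ) = μ * inner ℂ x y := by
    rw [hy', inner_smul_right]
  have h2 : (inner ℂ x (A y) : ℂ) = η * inner ℂ x y := by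
    rw [← ContinuousLinearMap.adjoint_inner_left, adj_eig hA hx', inner_smul_left]
    simp
  have : (μ - η) * (inner ℂ x y : ℂ) = 0 := by rw [sub_mul, h1.symm.trans h2]; ring
  rcases mul_eq_zero.mp this with h | h
  · exact absurd (by linear_combination h : μ = η) (Ne.symm hημ)
  · simpa [inner_eq_zero_symm] using h

lemma eig_sup {A : H →L[ℂ] H} (hA : IsStarNormal A) :
    (⨆ η : ℂ, Module.End.eigenspace (A : H →ₗ[ℂ] H) η) = ⊤ := by
  set Aa := ContinuousLinearMap.adjoint A with hAa
  set B : H →L[ℂ] H := A + Aa with hB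
  set C : H →L[ℂ] H := Complex.I • (Aa - A) with hC
  have hcomm := hA.star_comm_self
  rw [ContinuousLinearMap.star_eq_adjoint, ← hAa] at hcomm
  have hAaa : star Aa = A := by
    rw [hAa, ContinuousLinearMap.star_eq_adjoint, ContinuousLinearMap.adjoint_adjoint]
  have hAad : star A = Aa := by rw [ContinuousLinearMap.star_eq_adjoint, ← hAa]
  have hBsa : IsSelfAdjoint B := by
    simp only [IsSelfAdjoint, hB, star_add, hAaa, hAad]
    abel
  have hCsa : IsSelfAdjoint C := by
    simp only [IsSelfAdjoint, hC, star_smul, star_sub, hAaa, hAad,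
      RCLike.star_def, Complex.conj_I, neg_smul, smul_sub]
    abel
  have hBs : (B : H →ₗ[ℂ] H).IsSymmetric := hBsa.isSymmetric
  have hCs : (C : H →ₗ[ℂ] H).IsSymmetric := hCsa.isSymmetric
  have hBC : Commute (B : H →ₗ[ℂ] H) (C : H →ₗ[ℂ] H) := by
    have : Commute B C := by
      simp only [Commute, SemiconjBy, hB, hC, mul_smul_comm, smul_mul_assoc]
      congr 1
      simp only [add_mul, mul_add, sub_mul, mul_sub]
      rw [hcomm.eq]
      abel
    exact LinearMap.ext fun x => DFunLike.congr_fun this.eq x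
  have htop := LinearMap.IsSymmetric.iSup_iSup_eigenspace_inf_eigenspace_eq_top_of_commute hBs hCs hBC
  rw [eq_top_iff, ← htop]
  apply iSup₂_le
  intro β γ
  intro x hx
  obtain ⟨hxB, hxC⟩ := hx
  have hxB' : B x = β • x := Module.End.mem_eigenspace_iff.mp hxB
  have hxC' : C x = γ • x := Module.End.mem_eigenspace_iff.mp hxC
  have hAx : A x = ((β + Complex.I * γ) / 2) • x := by
    have h2A : (2 : ℂ) • A x = (β + Complex.I * γ) • x := by
      have : B x + Complex.I • C x = (2 : ℂ) • A x := by
        simp only [hB, hC, ContinuousLinearMap.add_apply, ContinuousLinearMap.smul_apply,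
          ContinuousLinearMap.sub_apply, smul_sub, smul_smul, Complex.I_mul_I, two_smul]
        module
      rw [← this, hxB', hxC', smul_smul, ← add_smul]
    have := congrArg (fun y => ((2 : ℂ)⁻¹) • y) h2A
    simpa [smul_smul, div_eq_inv_mul] using this
  exact Submodule.mem_iSup_of_mem ((β + Complex.I * γ) / 2)
    (Module.End.mem_eigenspace_iff.mpr (by simpa using hAx))


end Aux

/-- Quasimode lemma, part 2: if `A` is normal, `A v = α • v + w`, `v ≠ 0`, and
`‖w‖/‖v‖ < δ`, then letting `V_δ` be the sum of the eigenspaces of `A` for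
eigenvalues `η` with `|η - α| < δ`, there is a unit vector `e ∈ V_δ` such that
`‖v - ‖v‖ • e‖ ≤ 2‖w‖/δ`. -/
theorem stmt1 {H : Type*} [NormedAddCommGroup H] [InnerProductSpace ℂ H]
    [FiniteDimensional ℂ H] (A : H →L[ℂ] H) (hA : IsStarNormal A)
    (v w : H) (hv : v ≠ 0) (α : ℂ) (h : A v = α • v + w)
    (δ : ℝ) (hδ : 0 < δ) (hwv : ‖w‖ / ‖v‖ < δ) :
    ∃ e ∈ (⨆ η ∈ {η : ℂ | ‖η - α‖ < δ},
        Module.End.eigenspace (A : H →ₗ[ℂ] H) η),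
      ‖e‖ = 1 ∧ ‖v - ‖v‖ • e‖ ≤ 2 * ‖w‖ / δ := by
  classical
  have hv' : (0:ℝ) < ‖v‖ := norm_pos_iff.mpr hv
  have hwδ : ‖w‖ / δ < ‖v‖ := by
    rw [div_lt_iff₀ hδ]
    calc ‖w‖ = (‖w‖ / ‖v‖) * ‖v‖ := by field_simp
    _ < δ * ‖v‖ := mul_lt_mul_of_pos_right hwv hv'
    _ = ‖v‖ * δ := mul_comm _ _
  set e : ℂ → Submodule ℂ H := fun η => Module.End.eigenspace (A : H →ₗ[ℂ] H) η with he
  have hortho := eig_ortho hA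
  have hd : DirectSum.IsInternal e :=
    hortho.isInternal_iff.mpr
      (by rw [show iSup e = ⊤ from eig_sup hA]; exact Submodule.top_orthogonal_eq_bot)
  obtain ⟨f, hf⟩ := hd.surjective v
  set s := DFinsupp.support f with hs
  set s₁ := s.filter (fun η => ‖η - α‖ < δ) with hs₁
  set s₂ := s.filter (fun η => ¬ ‖η - α‖ < δ) with hs₂
  have hfη : ∀ η, A ((f η : H)) = η • (f η : H) := fun η =>
    Module.End.mem_eigenspace_iff.mp (f η).2
  have hvsum : v = ∑ η ∈ s, ((f η : H)) := by
    rw [← hf, DirectSum.coeAddMonoidHom_eq_dfinsuppSum]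
    rfl
  set v₁ := ∑ η ∈ s₁, ((f η : H)) with hv₁
  set v₂ := ∑ η ∈ s₂, ((f η : H)) with hv₂
  have hsplit : v = v₁ + v₂ := by
    rw [hvsum, hv₁, hv₂, Finset.sum_filter_add_sum_filter_not]
  have hw : w = ∑ η ∈ s, ((η - α) • (f η : H)) := by
    have hAv : A v = ∑ η ∈ s, η • (f η : H) := by
      rw [hvsum, map_sum]
      exact Finset.sum_congr rfl fun η _ => hfη η
    have : w = A v - α • v := by rw [h]; abel
    rw [this, hAv, hvsum, Finset.smul_sum, ← Finset.sum_sub_distrib]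
    exact Finset.sum_congr rfl fun η _ => (sub_smul η α _).symm
  -- norm identities
  have hnormsum : ∀ t : Finset ℂ, ‖∑ η ∈ t, ((f η : H))‖ ^ 2 = ∑ η ∈ t, ‖(f η : H)‖ ^ 2 :=
    fun t => hortho.norm_sum (fun η => f η) t
  have hnw : ‖w‖ ^ 2 = ∑ η ∈ s, ‖η - α‖ ^ 2 * ‖(f η : H)‖ ^ 2 := by
    have h1 := hortho.norm_sum (fun η => (η - α) • f η) s
    have h2 : ∑ η ∈ s, ((e η).subtypeₗᵢ) ((η - α) • f η) = w := by
      rw [hw]; rfl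
    rw [h2] at h1
    rw [h1]
    exact Finset.sum_congr rfl fun η _ => by
      rw [norm_smul, mul_pow]; rfl
  have hnv2 : ‖v₂‖ ^ 2 = ∑ η ∈ s₂, ‖(f η : H)‖ ^ 2 := hnormsum s₂
  have hnv1 : ‖v₁‖ ^ 2 = ∑ η ∈ s₁, ‖(f η : H)‖ ^ 2 := hnormsum s₁
  have hnv : ‖v‖ ^ 2 = ‖v₁‖ ^ 2 + ‖v₂‖ ^ 2 := by
    rw [hvsum, hnormsum s, hnv1, hnv2, hs₁, hs₂, Finset.sum_filter_add_sum_filter_not]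
  have hv2w : ‖v₂‖ ≤ ‖w‖ / δ := by
    have hsq : δ ^ 2 * ‖v₂‖ ^ 2 ≤ ‖w‖ ^ 2 := by
      rw [hnv2, hnw, Finset.mul_sum]
      calc ∑ η ∈ s₂, δ ^ 2 * ‖(f η : H)‖ ^ 2
          ≤ ∑ η ∈ s₂, ‖η - α‖ ^ 2 * ‖(f η : H)‖ ^ 2 := by
            apply Finset.sum_le_sum
            intro η hη
            have : δ ≤ ‖η - α‖ := le_of_not_gt (Finset.mem_filter.mp hη).2
            have h0 : (0:ℝ) ≤ ‖(f η : H)‖ ^ 2 := sq_nonneg _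
            have hsq : δ ^ 2 ≤ ‖η - α‖ ^ 2 := by nlinarith [hδ.le]
            exact mul_le_mul_of_nonneg_right hsq h0
        _ ≤ ∑ η ∈ s, ‖η - α‖ ^ 2 * ‖(f η : H)‖ ^ 2 := by
            apply Finset.sum_le_sum_of_subset_of_nonneg (Finset.filter_subset _ _)
            intro η _ _
            positivity
    rw [le_div_iff₀ hδ]
    nlinarith [norm_nonneg w, norm_nonneg v₂]
  have hv1ne : v₁ ≠ 0 := by
    intro h0
    rw [h0, zero_add] at hsplit
    rw [← hsplit] at hv2w
    linarith
  have hv1pos : (0:ℝ) < ‖v₁‖ := norm_pos_iff.mpr hv1ne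
  set E : H := ‖v₁‖⁻¹ • v₁ with hE
  refine ⟨E, ?_, ?_, ?_⟩
  · apply Submodule.smul_of_tower_mem
    apply Submodule.sum_mem
    intro η hη
    exact Submodule.mem_iSup_of_mem η
      (Submodule.mem_iSup_of_mem (Finset.mem_filter.mp hη).2 (f η).2)
  · rw [norm_smul, norm_inv, norm_norm, inv_mul_cancel₀ hv1pos.ne']
  · have h1le : ‖v₁‖ ≤ ‖v‖ := by nlinarith [norm_nonneg v, norm_nonneg v₁, norm_nonneg v₂]
    have htri : ‖v‖ ≤ ‖v₁‖ + ‖v₂‖ := by rw [hsplit]; exact norm_add_le _ _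
    have hE1 : ‖E‖ = 1 := by
      rw [hE, norm_smul, norm_inv, norm_norm, inv_mul_cancel₀ hv1pos.ne']
    have hvv1 : ‖v₁‖ • E = v₁ := by
      rw [hE, smul_smul, mul_inv_cancel₀ hv1pos.ne', one_smul]
    have hkey : (‖v₁‖ - ‖v‖) • E = v₁ - ‖v‖ • E := by rw [sub_smul, hvv1]
    calc ‖v - ‖v‖ • E‖
        = ‖(v - v₁) + (v₁ - ‖v‖ • E)‖ := by congr 1; abel
      _ ≤ ‖v - v₁‖ + ‖v₁ - ‖v‖ • E‖ := norm_add_le _ _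
      _ = ‖v₂‖ + ‖(‖v₁‖ - ‖v‖) • E‖ := by
          congr 1
          · congr 1; rw [hsplit]; abel
          · rw [hkey]
      _ = ‖v₂‖ + (‖v‖ - ‖v₁‖) := by
          rw [norm_smul, hE1, mul_one, Real.norm_eq_abs, abs_of_nonpos (by linarith), neg_sub]
      _ ≤ ‖v₂‖ + ‖v₂‖ := by linarith
      _ ≤ ‖w‖ / δ + ‖w‖ / δ := by linarith
      _ = 2 * ‖w‖ / δ := by ring
end

section
/- Let e^{2πiθ} be a primitive n-th root of unity (θ = p/n with gcd(p,n)=1). If X₁, X₂ are unitary operators on a finite-dimensional complex Hilbert space H satisfying X₁X₂ = e^{2πiθ}·X₂X₁ and having no common proper invariant subspace, then dim H = n. -/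
open ContinuousLinearMap Real

/-- If unitaries `X₁, X₂` on a nonzero finite-dimensional complex Hilbert
space satisfy `X₁X₂ = e^{2πi p/n} X₂X₁` with `e^{2πi p/n}` a primitive `n`-th
root of unity, and act irreducibly, then `dim H = n`. -/
theorem stmt7 {H : Type*} [NormedAddCommGroup H] [InnerProductSpace ℂ H]
    [FiniteDimensional ℂ H] [Nontrivial H]
    (n : ℕ) (hn : 1 ≤ n) (p : ℕ) (hp : Nat.Coprime p n)
    (X₁ X₂ : H →L[ℂ] H)
    (hu1 : adjoint X₁ * X₁ = 1) (hu1' : X₁ * adjoint X₁ = 1)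
    (hu2 : adjoint X₂ * X₂ = 1) (hu2' : X₂ * adjoint X₂ = 1)
    (hcomm : X₁ * X₂ =
      Complex.exp (2 * Real.pi * Complex.I * p / n) • (X₂ * X₁))
    (hirr : ∀ V : Submodule ℂ H, (∀ v ∈ V, X₁ v ∈ V) → (∀ v ∈ V, X₂ v ∈ V) →
      V = ⊥ ∨ V = ⊤) :
    Module.finrank ℂ H = n := by
  set q : ℂ := Complex.exp (2 * Real.pi * Complex.I * p / n) with hqdef
  have hn0 : (n : ℂ) ≠ 0 := Nat.cast_ne_zero.mpr (by omega)
  have hq0 : q ≠ 0 := Complex.exp_ne_zero _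
  -- q ^ m = 1 → n ∣ m
  have hdvd : ∀ m : ℕ, q ^ m = 1 → n ∣ m := by
    intro m hm
    rw [hqdef, ← Complex.exp_nat_mul] at hm
    obtain ⟨t, ht⟩ := Complex.exp_eq_one_iff.mp hm
    have h2 : (2 * Real.pi * Complex.I) * ((m * p : ℂ) / n) =
        (2 * Real.pi * Complex.I) * t := by linear_combination ht
    have h3 : (m * p : ℂ) / n = t :=
      mul_left_cancel₀ Complex.two_pi_I_ne_zero h2
    have h4 : ((m * p : ℕ) : ℂ) = ((t * n : ℤ) : ℂ) := by
      push_cast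
      field_simp at h3 ⊢
      linear_combination h3
    have h5 : ((m * p : ℕ) : ℤ) = t * n := by exact_mod_cast h4
    have h6 : (n : ℤ) ∣ (m * p : ℕ) := ⟨t, by rw [h5]; ring⟩
    have h7 : n ∣ m * p := Int.ofNat_dvd.mp (by exact_mod_cast h6)
    exact (Nat.Coprime.dvd_of_dvd_mul_right hp.symm h7)
  have hqn : q ^ n = 1 := by
    rw [hqdef, ← Complex.exp_nat_mul]
    have : (n : ℂ) * (2 * Real.pi * Complex.I * p / n) = p * (2 * Real.pi * Complex.I) := by
      field_simp
    rw [this]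
    have h := Complex.exp_int_mul_two_pi_mul_I (p : ℤ)
    push_cast at h
    exact h
  -- commutation with powers
  have hck : ∀ k : ℕ, X₁ * X₂ ^ k = q ^ k • (X₂ ^ k * X₁) := by
    intro k
    induction k with
    | zero => simp
    | succ k ih =>
      calc X₁ * X₂ ^ (k + 1) = (X₁ * X₂ ^ k) * X₂ := by rw [pow_succ, mul_assoc]
      _ = q ^ k • (X₂ ^ k * (X₁ * X₂)) := by rw [ih, smul_mul_assoc, mul_assoc]
      _ = q ^ k • (X₂ ^ k * (q • (X₂ * X₁))) := by rw [hcomm]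
      _ = q ^ (k + 1) • (X₂ ^ (k + 1) * X₁) := by
          rw [mul_smul_comm, smul_smul, pow_succ, pow_succ, mul_assoc]
  -- X₂ is injective
  have hX2inj : Function.Injective X₂ := by
    intro a b hab
    have := congrArg (adjoint X₂) hab
    simpa [← ContinuousLinearMap.mul_apply, hu2] using this
  -- eigenvalue of X₁
  obtain ⟨lam, hlam⟩ := Module.End.exists_eigenvalue (X₁ : H →ₗ[ℂ] H)
  have hEne : Module.End.eigenspace (X₁ : H →ₗ[ℂ] H) lam ≠ ⊥ := hlam
  haveI : Nontrivial (Module.End.eigenspace (X₁ : H →ₗ[ℂ] H) lam) :=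
    Submodule.nontrivial_iff_ne_bot.mpr hEne
  -- X₂ ^ n commutes with X₁
  have hcn : X₁ * X₂ ^ n = X₂ ^ n * X₁ := by
    rw [hck n, hqn, one_smul]
  -- restrict X₂^n to E
  have hmapE : ∀ x ∈ Module.End.eigenspace (X₁ : H →ₗ[ℂ] H) lam,
      (X₂ ^ n) x ∈ Module.End.eigenspace (X₁ : H →ₗ[ℂ] H) lam := by
    intro x hx
    rw [Module.End.mem_eigenspace_iff] at hx ⊢
    simp only [ContinuousLinearMap.coe_coe] at hx ⊢
    have h1 : X₁ ((X₂ ^ n) x) = (X₂ ^ n) (X₁ x) := by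
      rw [← ContinuousLinearMap.mul_apply, hcn, ContinuousLinearMap.mul_apply]
    rw [h1, hx, map_smul]
  set B := ((X₂ ^ n : H →L[ℂ] H) : H →ₗ[ℂ] H).restrict hmapE with hBdef
  obtain ⟨mu, hmu⟩ := Module.End.exists_eigenvalue B
  obtain ⟨w, hw⟩ := hmu.exists_hasEigenvector
  set v : H := (w : H) with hvdef
  have hv0 : v ≠ 0 := fun h => hw.right (by simpa [hvdef, Submodule.coe_eq_zero] using h)
  have hv1 : X₁ v = lam • v := by
    have h := Module.End.mem_eigenspace_iff.mp w.2
    simpa using h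
  have hv2 : (X₂ ^ n) v = mu • v := by
    have h1 : B w = mu • w := Module.End.mem_eigenspace_iff.mp hw.left
    have := congrArg (Subtype.val) h1
    simpa [hBdef, LinearMap.restrict_apply, hvdef, Module.End.pow_apply] using this
  have hlam0 : lam ≠ 0 := by
    intro h
    apply hv0
    have h1 : X₁ v = 0 := by rw [hv1, h, zero_smul]
    have := congrArg (adjoint X₁) h1
    simpa [← ContinuousLinearMap.mul_apply, hu1] using this
  -- eigenvectors
  have hev : ∀ k : ℕ, X₁ ((X₂ ^ k) v) = (q ^ k * lam) • ((X₂ ^ k) v) := by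
    intro k
    calc X₁ ((X₂ ^ k) v) = (X₁ * X₂ ^ k) v := rfl
    _ = (q ^ k • (X₂ ^ k * X₁)) v := by rw [hck]
    _ = q ^ k • (X₂ ^ k) (X₁ v) := rfl
    _ = q ^ k • (X₂ ^ k) (lam • v) := by rw [hv1]
    _ = (q ^ k * lam) • ((X₂ ^ k) v) := by rw [map_smul, smul_smul]
  have hne : ∀ k : ℕ, (X₂ ^ k) v ≠ 0 := by
    intro k
    induction k with
    | zero => simpa using hv0
    | succ k ih =>
      intro h
      apply ih
      have h1 : (X₂ ^ (k + 1)) v = X₂ ((X₂ ^ k) v) := by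
        rw [pow_succ']; rfl
      rw [h1] at h
      exact hX2inj (by simpa using h)
  -- the span
  set W := Submodule.span ℂ (Set.range fun k : Fin n => (X₂ ^ (k : ℕ)) v) with hWdef
  have hWX1 : ∀ x ∈ W, X₁ x ∈ W := by
    intro x hx
    induction hx using Submodule.span_induction with
    | mem x h =>
      obtain ⟨k, rfl⟩ := h
      rw [hev]
      exact Submodule.smul_mem _ _ (Submodule.subset_span ⟨k, rfl⟩)
    | zero => simp
    | add x y hx hy ihx ihy => rw [map_add]; exact Submodule.add_mem _ ihx ihy
    | smul a x hx ihx => rw [map_smul]; exact Submodule.smul_mem _ _ ihx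
  have hWX2 : ∀ x ∈ W, X₂ x ∈ W := by
    intro x hx
    induction hx using Submodule.span_induction with
    | mem x h =>
      obtain ⟨k, rfl⟩ := h
      have h1 : X₂ ((X₂ ^ (k : ℕ)) v) = (X₂ ^ ((k : ℕ) + 1)) v := by
        rw [pow_succ']; rfl
      rw [h1]
      rcases lt_or_ge ((k : ℕ) + 1) n with hlt | hge
      · exact Submodule.subset_span ⟨⟨(k : ℕ) + 1, hlt⟩, rfl⟩
      · have hk : (k : ℕ) + 1 = n := by omega
        rw [hk, hv2]
        exact Submodule.smul_mem _ _
          (Submodule.subset_span ⟨⟨0, by omega⟩, by simp⟩)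
    | zero => simp
    | add x y hx hy ihx ihy => rw [map_add]; exact Submodule.add_mem _ ihx ihy
    | smul a x hx ihx => rw [map_smul]; exact Submodule.smul_mem _ _ ihx
  have hWtop : W = ⊤ := by
    rcases hirr W hWX1 hWX2 with h | h
    · exfalso
      have hvW : v ∈ W := Submodule.subset_span ⟨⟨0, by omega⟩, by simp⟩
      rw [h] at hvW
      exact hv0 (Submodule.mem_bot ℂ |>.mp hvW)
    · exact h
  -- linear independence
  have hinj : Function.Injective (fun k : Fin n => q ^ (k : ℕ) * lam) := by
    have aux : ∀ j k : Fin n, (j : ℕ) ≤ (k : ℕ) → q ^ (j : ℕ) = q ^ (k : ℕ) → j = k := by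
      intro j k hjk hq
      have h1 : q ^ ((k : ℕ) - (j : ℕ)) = 1 := by
        have h2 : q ^ (j : ℕ) * q ^ ((k : ℕ) - (j : ℕ)) = q ^ (k : ℕ) := by
          rw [← pow_add]; congr 1; omega
        rw [← hq] at h2
        field_simp at h2
        exact h2
      have h3 := hdvd _ h1
      have hkb := k.isLt
      have : (j : ℕ) = (k : ℕ) := by
        by_contra hne'
        have hpos : 0 < (k : ℕ) - (j : ℕ) := by omega
        have := Nat.le_of_dvd hpos h3
        omega
      exact Fin.ext this
    intro j k h
    simp only at h
    have hq : q ^ (j : ℕ) = q ^ (k : ℕ) := mul_right_cancel₀ hlam0 h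
    rcases le_total (j : ℕ) (k : ℕ) with hle | hle
    · exact aux j k hle hq
    · exact (aux k j hle hq.symm).symm
  have hli : LinearIndependent ℂ (fun k : Fin n => (X₂ ^ (k : ℕ)) v) := by
    apply Module.End.eigenvectors_linearIndependent' (X₁ : H →ₗ[ℂ] H)
      (fun k : Fin n => q ^ (k : ℕ) * lam) hinj
    intro k
    constructor
    · rw [Module.End.mem_eigenspace_iff]
      exact hev (k : ℕ)
    · exact hne (k : ℕ)
  have h1 : Module.finrank ℂ W = n := by
    rw [hWdef, finrank_span_eq_card hli, Fintype.card_fin]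
  rw [hWtop] at h1
  rw [← h1, finrank_top]
end

section
/- Let x₁, x₂ be unitary operators on a finite-dimensional Hilbert space H with ‖x₁x₂ - e^{2πi/n}·x₂x₁‖_op ≤ ε, where n ≥ 1 and ε·n < 2·sin(π/n) (so that the points λ₀e^{2πim/n} shifted by error mε remain distinct). Then for any eigenvalue λ₀ of x₁, and for every 0 ≤ m < n, there exists an eigenvalue λ_m of x₁ with |λ_m - λ₀·e^{2πim/n}| ≤ m·ε. In particular, if these n values are pairwise distinct, then dim H ≥ n. -/
open ContinuousLinearMap Module Metric Pointwise
open scoped ENNReal NNReal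

lemma inv_comm_star_of_comm_star {A : Type*} [Ring A] [StarRing A] {S B : A}
    (h1 : S * B = 1) (h2 : B * S = 1) (hc : S * star S = star S * S) :
    B * star B = star B * B := by
  have c1 : B * star S = star S * B := by
    calc B * star S = B * star S * (S * B) := by rw [h1, mul_one]
    _ = B * (star S * S) * B := by rw [mul_assoc, mul_assoc, mul_assoc]
    _ = B * (S * star S) * B := by rw [hc]
    _ = (B * S) * (star S * B) := by rw [mul_assoc, mul_assoc, mul_assoc]
    _ = star S * B := by rw [h2, one_mul]
  have c2 : S * star B = star B * S := by
    have := congrArg star c1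
    simpa [star_mul, star_star] using this
  calc B * star B = B * star B * (S * B) := by rw [h1, mul_one]
  _ = B * (star B * S) * B := by rw [mul_assoc, mul_assoc, mul_assoc]
  _ = B * (S * star B) * B := by rw [c2]
  _ = (B * S) * (star B * B) := by rw [mul_assoc, mul_assoc, mul_assoc]
  _ = star B * B := by rw [h2, one_mul]


lemma quasimode {H : Type*} [NormedAddCommGroup H] [InnerProductSpace ℂ H]
    [FiniteDimensional ℂ H] (T : H →L[ℂ] H) (hT : T * star T = star T * T)
    (μ : ℂ) (δ : ℝ) (hδ : 0 ≤ δ) (v : H) (hv : v ≠ 0)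
    (hq : ‖T v - μ • v‖ ≤ δ * ‖v‖) :
    ∃ lam : ℂ, Module.End.HasEigenvalue (T : H →ₗ[ℂ] H) lam ∧ ‖lam - μ‖ ≤ δ := by
  have : Nontrivial H := nontrivial_of_ne v 0 hv
  have hne : (spectrum ℂ T).Nonempty := spectrum.nonempty T
  obtain ⟨lam, hlam, hd⟩ := (spectrum.isCompact T).exists_infDist_eq_dist hne μ
  have hspec : spectrum ℂ T = spectrum ℂ (T : H →ₗ[ℂ] H) := by
    exact AlgEquiv.spectrum_eq (Module.End.toContinuousLinearMap H (𝕜 := ℂ)) (T : H →ₗ[ℂ] H)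
  refine ⟨lam, Module.End.hasEigenvalue_iff_mem_spectrum.mpr (hspec ▸ hlam), ?_⟩
  by_contra hcon
  push_neg at hcon
  have hcon' : δ < infDist μ (spectrum ℂ T) := by
    rw [hd, dist_comm]
    simpa [dist_eq_norm] using hcon
  set d := infDist μ (spectrum ℂ T) with hdd
  have hdpos : 0 < d := lt_of_le_of_lt hδ hcon'
  have hμspec : μ ∉ spectrum ℂ T := by
    intro hm
    have h2 := infDist_le_dist_of_mem (x := μ) hm
    simp only [dist_self] at h2
    rw [← hdd] at h2
    linarith
  have hunit : IsUnit ((algebraMap ℂ (H →L[ℂ] H)) μ - T) := spectrum.notMem_iff.mp hμspec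
  set S := (algebraMap ℂ (H →L[ℂ] H)) μ - T with hS
  set u := hunit.unit with hu
  have huv : (u : H →L[ℂ] H) = S := hunit.unit_spec
  set B := ((u⁻¹ : (H →L[ℂ] H)ˣ) : H →L[ℂ] H) with hB
  have hSB : S * B = 1 := by rw [← huv]; exact u.mul_inv
  have hBS : B * S = 1 := by rw [← huv]; exact u.inv_mul
  have hSnormal : S * star S = star S * S := by
    have h1 : S = μ • 1 - T := by rw [hS, Algebra.algebraMap_eq_smul_one]
    rw [h1]
    simp only [star_sub, star_smul, star_one, Complex.star_def]
    simp only [sub_mul, mul_sub, smul_mul_assoc, mul_smul_comm, one_mul, mul_one, smul_sub, smul_smul]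
    rw [hT, mul_comm μ (starRingEnd ℂ μ)]
    abel
  have hBnormal : B * star B = star B * B := inv_comm_star_of_comm_star hSB hBS hSnormal
  haveI : IsStarNormal B := ⟨hBnormal.symm⟩
  have hrad : spectralRadius ℂ B = ‖B‖₊ := IsStarNormal.spectralRadius_eq_nnnorm B
  have hbound : spectralRadius ℂ B ≤ ENNReal.ofReal (1 / d) := by
    rw [spectralRadius]
    refine iSup₂_le fun k hk => ?_
    have hk0 : k ≠ 0 := by
      intro h0
      rw [h0] at hk
      exact spectrum.zero_notMem ℂ (u⁻¹).isUnit hk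
    have hkinv : (k⁻¹ : ℂ) ∈ spectrum ℂ S := by
      have hmem : ((Units.mk0 k hk0 : ℂˣ) : ℂ) ∈ spectrum ℂ ((u⁻¹ : (H →L[ℂ] H)ˣ) : H →L[ℂ] H) := hk
      have h2 := spectrum.inv_mem_iff.mp hmem
      simpa [huv] using h2
    have hsub : (k⁻¹ : ℂ) ∈ ({μ} : Set ℂ) - spectrum ℂ T := by
      rw [spectrum.singleton_sub_eq]; exact hkinv
    obtain ⟨μ', hμ', lam', hlam', hkk⟩ := hsub
    rw [Set.mem_singleton_iff] at hμ'
    have hkk' : μ - lam' = k⁻¹ := by rw [← hμ']; exact hkk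
    have hnk : d ≤ ‖(k⁻¹ : ℂ)‖ := by
      rw [← hkk']
      have h3 := infDist_le_dist_of_mem (x := μ) hlam'
      rw [← hdd] at h3
      simpa [dist_eq_norm] using h3
    have hkpos : 0 < ‖k‖ := norm_pos_iff.mpr hk0
    have hkle : ‖k‖ ≤ 1 / d := by
      rw [norm_inv] at hnk
      have h4 := mul_le_mul_of_nonneg_right hnk (le_of_lt hkpos)
      rw [inv_mul_cancel₀ (ne_of_gt hkpos)] at h4
      rw [le_div_iff₀ hdpos]
      linarith
    calc (‖k‖₊ : ℝ≥0∞) = ENNReal.ofReal ‖k‖ := (ofReal_norm k).symm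
    _ ≤ ENNReal.ofReal (1 / d) := ENNReal.ofReal_le_ofReal hkle
  have hBnorm : ‖B‖ ≤ 1 / d := by
    rw [hrad] at hbound
    rw [← enorm_eq_nnnorm, ← ofReal_norm] at hbound
    exact (ENNReal.ofReal_le_ofReal_iff (by positivity)).mp hbound
  have hv1 : v = B (S v) := by
    have h5 : (B * S) v = v := by rw [hBS]; rfl
    simpa using h5.symm
  have hSv : ‖S v‖ ≤ δ * ‖v‖ := by
    have h6 : S v = μ • v - T v := by
      rw [hS]
      simp [Algebra.algebraMap_eq_smul_one]
    rw [h6, norm_sub_rev]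
    exact hq
  have hfin : ‖v‖ ≤ (1 / d) * (δ * ‖v‖) := by
    calc ‖v‖ = ‖B (S v)‖ := by rw [← hv1]
    _ ≤ ‖B‖ * ‖S v‖ := le_opNorm _ _
    _ ≤ (1 / d) * (δ * ‖v‖) :=
      mul_le_mul hBnorm hSv (norm_nonneg _) (by positivity)
  have hvpos : 0 < ‖v‖ := norm_pos_iff.mpr hv
  have hlt : (1 / d) * (δ * ‖v‖) < ‖v‖ := by
    rw [div_mul_eq_mul_div, one_mul, div_lt_iff₀ hdpos]
    nlinarith
  linarith

lemma ladder_step {H : Type*} [NormedAddCommGroup H] [InnerProductSpace ℂ H]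
    [FiniteDimensional ℂ H] (x₁ x₂ : H →L[ℂ] H)
    (hu1 : adjoint x₁ * x₁ = 1) (hu1' : x₁ * adjoint x₁ = 1)
    (hu2 : adjoint x₂ * x₂ = 1)
    (e : ℂ) (ε : ℝ) (hε : 0 ≤ ε)
    (h : ‖x₁ * x₂ - e • (x₂ * x₁)‖ ≤ ε)
    (ν : ℂ) (hν : Module.End.HasEigenvalue (x₁ : H →ₗ[ℂ] H) ν) :
    ∃ ν' : ℂ, Module.End.HasEigenvalue (x₁ : H →ₗ[ℂ] H) ν' ∧ ‖ν' - e * ν‖ ≤ ε := by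
  have hT : x₁ * star x₁ = star x₁ * x₁ := by
    rw [ContinuousLinearMap.star_eq_adjoint, hu1, hu1']
  obtain ⟨w, hw⟩ := hν.exists_hasEigenvector
  have hw0 : w ≠ 0 := hw.right
  have hx1w : x₁ w = ν • w := hw.apply_eq_smul
  have hiso : ‖x₂ w‖ = ‖w‖ := by
    have hadj : adjoint x₂ (x₂ w) = w := by
      have h7 := congrArg (fun f : H →L[ℂ] H => f w) hu2
      simpa using h7
    have h1 : (inner ℂ (x₂ w) (x₂ w) : ℂ) = inner ℂ w w := by
      rw [← ContinuousLinearMap.adjoint_inner_left, hadj]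
    rw [inner_self_eq_norm_sq_to_K, inner_self_eq_norm_sq_to_K] at h1
    have h2 : ‖x₂ w‖ ^ 2 = ‖w‖ ^ 2 := by exact_mod_cast h1
    have h3 := norm_nonneg (x₂ w)
    have h4 := norm_nonneg w
    refine le_antisymm ?_ ?_ <;> nlinarith
  have hw20 : x₂ w ≠ 0 := by
    intro h8
    apply hw0
    rw [← norm_eq_zero, ← hiso, h8, norm_zero]
  have hkey : x₁ (x₂ w) - (e * ν) • (x₂ w) = (x₁ * x₂ - e • (x₂ * x₁)) w := by
    simp only [ContinuousLinearMap.sub_apply, ContinuousLinearMap.smul_apply,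
      ContinuousLinearMap.mul_apply, hx1w, map_smul, smul_smul]
  have hq : ‖x₁ (x₂ w) - (e * ν) • (x₂ w)‖ ≤ ε * ‖x₂ w‖ := by
    rw [hkey, hiso]
    calc ‖(x₁ * x₂ - e • (x₂ * x₁)) w‖ ≤ ‖x₁ * x₂ - e • (x₂ * x₁)‖ * ‖w‖ :=
      ContinuousLinearMap.le_opNorm _ _
    _ ≤ ε * ‖w‖ := mul_le_mul_of_nonneg_right h (norm_nonneg _)
  exact quasimode x₁ hT (e * ν) ε hε (x₂ w) hw20 hq


/-- Iterated ladder: if unitaries `x₁, x₂` satisfy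
`‖x₁x₂ - e^{2πi/n} • x₂x₁‖ ≤ ε` with `εn < 2 sin(π/n)`, then starting from any
eigenvalue `λ₀` of `x₁` one obtains, for every `0 ≤ m < n`, an eigenvalue
`λ_m` of `x₁` with `|λ_m - λ₀ e^{2πim/n}| ≤ mε`; if these are pairwise
distinct then `dim H ≥ n`. -/
theorem stmt11 {H : Type*} [NormedAddCommGroup H] [InnerProductSpace ℂ H]
    [FiniteDimensional ℂ H] (n : ℕ) (hn : 1 ≤ n)
    (x₁ x₂ : H →L[ℂ] H)
    (hu1 : adjoint x₁ * x₁ = 1) (hu1' : x₁ * adjoint x₁ = 1)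
    (hu2 : adjoint x₂ * x₂ = 1) (hu2' : x₂ * adjoint x₂ = 1)
    (ε : ℝ) (hε : 0 ≤ ε)
    (hsmall : ε * n < 2 * Real.sin (Real.pi / n))
    (h : ‖x₁ * x₂ - Complex.exp (2 * Real.pi * Complex.I / n) • (x₂ * x₁)‖ ≤ ε)
    (lam₀ : ℂ) (h0 : Module.End.HasEigenvalue (x₁ : H →ₗ[ℂ] H) lam₀) :
    ∃ lam : Fin n → ℂ,
      (∀ m : Fin n, Module.End.HasEigenvalue (x₁ : H →ₗ[ℂ] H) (lam m) ∧
        ‖lam m - lam₀ * Complex.exp (2 * Real.pi * Complex.I / n) ^ (m : ℕ)‖ ≤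
          (m : ℕ) * ε) ∧
      (Function.Injective lam → n ≤ Module.finrank ℂ H) := by
  set e : ℂ := Complex.exp (2 * Real.pi * Complex.I / n) with he
  have hnorme : ‖e‖ = 1 := by
    rw [he]
    have h9 : (2 * (Real.pi : ℂ) * Complex.I / (n : ℂ)) =
        ((2 * Real.pi / n : ℝ) : ℂ) * Complex.I := by
      push_cast
      ring
    rw [h9, Complex.norm_exp_ofReal_mul_I]
  have key : ∀ m : ℕ, ∃ c : ℂ, Module.End.HasEigenvalue (x₁ : H →ₗ[ℂ] H) c ∧
      ‖c - lam₀ * e ^ m‖ ≤ m * ε := by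
    intro m
    induction m with
    | zero => exact ⟨lam₀, h0, by simp⟩
    | succ m ih =>
      obtain ⟨c, hc, hb⟩ := ih
      obtain ⟨c', hc', hb'⟩ := ladder_step x₁ x₂ hu1 hu1' hu2 e ε hε h c hc
      refine ⟨c', hc', ?_⟩
      have htri : ‖c' - lam₀ * e ^ (m + 1)‖ ≤ ‖c' - e * c‖ + ‖e * c - lam₀ * e ^ (m + 1)‖ := by
        have : c' - lam₀ * e ^ (m + 1) = (c' - e * c) + (e * c - lam₀ * e ^ (m + 1)) := by ring
        rw [this]
        exact norm_add_le _ _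
      have hsec : ‖e * c - lam₀ * e ^ (m + 1)‖ = ‖c - lam₀ * e ^ m‖ := by
        have : e * c - lam₀ * e ^ (m + 1) = e * (c - lam₀ * e ^ m) := by ring
        rw [this, norm_mul, hnorme, one_mul]
      calc ‖c' - lam₀ * e ^ (m + 1)‖ ≤ ‖c' - e * c‖ + ‖c - lam₀ * e ^ m‖ := by
            rw [← hsec]; exact htri
      _ ≤ ε + m * ε := add_le_add hb' hb
      _ = (m + 1 : ℕ) * ε := by push_cast; ring
  refine ⟨fun m => (key m).choose, fun m => (key m).choose_spec, ?_⟩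
  intro hinj
  have hev : ∀ m : Fin n, ∃ v : H,
      Module.End.HasEigenvector (x₁ : H →ₗ[ℂ] H) ((key m).choose) v := fun m =>
    ((key m).choose_spec.1).exists_hasEigenvector
  choose v hv using hev
  have hli : LinearIndependent ℂ v :=
    Module.End.eigenvectors_linearIndependent' (x₁ : H →ₗ[ℂ] H) _ hinj v hv
  simpa using hli.fintype_card_le_finrank
end
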